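/- Let n ∈ ℕ and let s ∈ ℝⁿ be sorted non-increasingly with ∑ᵢ sᵢ = 0. If s₁ > (n−1)/2, then γ₁ > n/2 = γ_n, where γ_ℓ := (1/ℓ)∑_{j=1}^{ℓ} s_j + ℓ/2; consequently there exists i ∈ [n−1] with γ_i > n/2 and γ_i > γ_{i+1}. -/

import Mathlib

/-- If `s` is sorted non-increasingly with total sum zero and
`s 0 > (n−1)/2`, then `γ 1 > n/2 = γ n`, and consequently there exists
`i ∈ [n−1]` with `γ i > n/2` and `γ i > γ (i+1)`. Here
`γ ℓ := (1/ℓ)∑_{j<ℓ} s j + ℓ/2`. -/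
theorem stmt1 (n : ℕ) (hn : 1 ≤ n) (s : ℕ → ℝ)
    (hsort : ∀ i j, i ≤ j → j < n → s j ≤ s i)
    (hsum : ∑ j ∈ Finset.range n, s j = 0)
    (γ : ℕ → ℝ)
    (hγ : ∀ ℓ, γ ℓ = (∑ j ∈ Finset.range ℓ, s j) / (ℓ : ℝ) + (ℓ : ℝ) / 2)
    (h1 : s 0 > ((n : ℝ) - 1) / 2) :
    γ 1 > (n : ℝ) / 2 ∧ γ n = (n : ℝ) / 2 ∧
      ∃ i, 1 ≤ i ∧ i ≤ n - 1 ∧ γ i > (n : ℝ) / 2 ∧ γ i > γ (i + 1) := by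
  have hγ1 : γ 1 = s 0 + 1/2 := by
    rw [hγ 1]; simp
  have hγ1gt : γ 1 > (n : ℝ) / 2 := by
    rw [hγ1]; linarith
  have hγn : γ n = (n : ℝ) / 2 := by
    rw [hγ n, hsum]; simp
  refine ⟨hγ1gt, hγn, ?_⟩
  rcases eq_or_lt_of_le hn with h1n | h2n
  · -- n = 1 : contradiction
    exfalso
    subst h1n
    norm_num at hγn
    rw [hγn] at hγ1gt
    norm_num at hγ1gt
  · -- n ≥ 2
    have h2n' : 2 ≤ n := h2n
    set S : Finset ℕ := (Finset.range n).filter (fun i => 1 ≤ i ∧ γ i > (n : ℝ) / 2) with hS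
    have h1S : 1 ∈ S := by
      simp [hS, Finset.mem_filter]
      exact ⟨h2n', hγ1gt⟩
    have hne : S.Nonempty := ⟨1, h1S⟩
    set i := S.max' hne with hi
    have hiS : i ∈ S := S.max'_mem hne
    obtain ⟨hilt, hi1, hig⟩ : i ∈ Finset.range n ∧ 1 ≤ i ∧ γ i > (n : ℝ) / 2 := by
      simpa [hS, Finset.mem_filter, and_assoc] using hiS
    have hiltn : i < n := Finset.mem_range.mp hilt
    refine ⟨i, hi1, Nat.le_sub_one_of_lt hiltn, hig, ?_⟩
    rcases eq_or_lt_of_le (Nat.succ_le_of_lt hiltn) with heq | hlt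
    · have : i + 1 = n := heq
      rw [this, hγn]; exact hig
    · have : i + 1 ∉ S := fun h => absurd (S.le_max' _ h) (by omega)
      have hle : γ (i + 1) ≤ (n : ℝ) / 2 := by
        by_contra hc
        exact this (by
          simp only [hS, Finset.mem_filter, Finset.mem_range]
          exact ⟨hlt, by omega, lt_of_not_ge hc⟩)
      linarith
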